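/- Let m > 0, ω > 0, σ > 0, ν ≥ 0 and g_r ∈ ℝ. Define N = [2^{ν+5/2} σ^{ν+3/2}/Γ(ν+3/2)]^{1/2}, F(t) = mω cos(ωt) + 2iσ sin(ωt), B(t) = -(mω/2)·(2σ cos(ωt) + i mω sin(ωt))/F(t), and for a > 0 and t ∈ ℝ with F(t) not a nonpositive real number, Ψ(a,t) = N e^{i g_r t} a^{ν+1} (mω)^{ν+3/2} exp(-(ν+3/2)·Log F(t)) exp(B(t) a²), with Log the principal branch. Then: (i) for all such (a,t), Ψ satisfies the Schrödinger–Wheeler–DeWitt equation i ∂Ψ/∂t = -(1/(2m)) ∂²Ψ/∂a² + (½ m ω² a² - g_r + ν(ν+1)/(2m a²)) Ψ; (ii) Ψ(a,0) = N a^{ν+1} e^{-σa²} for all a > 0. -/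

import Mathlib

set_option maxHeartbeats 4000000 in
/-- The exact solution of the closed Hořava–Lifshitz FLRW Schrödinger–Wheeler–DeWitt
equation: with `N = [2^{ν+5/2}σ^{ν+3/2}/Γ(ν+3/2)]^{1/2}`,
`F(t) = mω cos(ωt) + 2iσ sin(ωt)` and
`B(t) = -(mω/2)(2σ cos(ωt) + i mω sin(ωt))/F(t)`, the function
`Ψ(a,t) = N e^{i g_r t} a^{ν+1} (mω)^{ν+3/2} exp(-(ν+3/2) Log F(t)) exp(B(t) a²)`
(principal branch) satisfies (i) the equation
`i ∂Ψ/∂t = -(1/(2m)) ∂²Ψ/∂a² + (½ m ω² a² - g_r + ν(ν+1)/(2m a²)) Ψ` at every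
`a > 0` and every `t` at which `F(t)` is not a nonpositive real number, and
(ii) the initial condition `Ψ(a,0) = N a^{ν+1} e^{-σa²}` for `a > 0`. -/
theorem closed_universe_wave_packet (m ω σ ν gr : ℝ)
    (hm : 0 < m) (hω : 0 < ω) (hσ : 0 < σ) (hν : 0 ≤ ν)
    (N : ℝ)
    (hN : N = Real.sqrt ((2:ℝ) ^ (ν + 5/2) * σ ^ (ν + 3/2) / Real.Gamma (ν + 3/2)))
    (F B : ℝ → ℂ)
    (hF : ∀ t : ℝ, F t = (m:ℂ)*(ω:ℂ)*((Real.cos (ω*t) : ℝ) : ℂ)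
        + 2*Complex.I*(σ:ℂ)*((Real.sin (ω*t) : ℝ) : ℂ))
    (hB : ∀ t : ℝ, B t = -((m:ℂ)*(ω:ℂ)/2)
        * (2*(σ:ℂ)*((Real.cos (ω*t) : ℝ) : ℂ)
            + Complex.I*(m:ℂ)*(ω:ℂ)*((Real.sin (ω*t) : ℝ) : ℂ)) / F t)
    (Ψ : ℝ → ℝ → ℂ)
    (hΨ : ∀ a t : ℝ, Ψ a t = (N:ℂ) * Complex.exp (Complex.I*(gr:ℂ)*(t:ℂ))
        * ((a ^ (ν + 1) : ℝ) : ℂ) * (((m*ω) ^ (ν + 3/2) : ℝ) : ℂ)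
        * Complex.exp (-((ν:ℂ) + 3/2) * Complex.log (F t))
        * Complex.exp (B t * (a:ℂ)^2)) :
    (∀ a > (0:ℝ), ∀ t : ℝ, ¬((F t).im = 0 ∧ (F t).re ≤ 0) →
      Complex.I * deriv (fun t' => Ψ a t') t
        = -(1/(2*(m:ℂ))) * deriv (deriv (fun a' => Ψ a' t)) a
          + ((m*ω^2*a^2/2 - gr + ν*(ν+1)/(2*m*a^2) : ℝ) : ℂ) * Ψ a t) ∧
    (∀ a > (0:ℝ), Ψ a 0 = (N:ℂ) * ((a ^ (ν + 1) : ℝ) : ℂ)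
        * Complex.exp (-(σ:ℂ)*(a:ℂ)^2)) := by
  have hmC : (m:ℂ) ≠ 0 := Complex.ofReal_ne_zero.mpr hm.ne'
  have hωC : (ω:ℂ) ≠ 0 := Complex.ofReal_ne_zero.mpr hω.ne'
  constructor
  · intro a ha t hslit
    have haR : a ≠ 0 := ha.ne'
    have haC : (a:ℂ) ≠ 0 := Complex.ofReal_ne_zero.mpr haR
    have hslit' : F t ∈ Complex.slitPlane := by
      rw [Complex.mem_slitPlane_iff]
      rcases not_and_or.mp hslit with h | h
      · exact Or.inr h
      · exact Or.inl (lt_of_not_ge h)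
    have hFne : F t ≠ 0 := Complex.slitPlane_ne_zero hslit'
    have hmul : HasDerivAt (fun t' : ℝ => ω * t') ω t := by
      simpa using (hasDerivAt_id t).const_mul ω
    have hcos : HasDerivAt (fun t' : ℝ => ((Real.cos (ω * t') : ℝ) : ℂ)) (-((Real.sin (ω*t) : ℝ) : ℂ) * (ω:ℂ)) t := by
      have h := ((Real.hasDerivAt_cos (ω*t)).comp t hmul).ofReal_comp
      exact h.congr_deriv (by push_cast; ring)
    have hsin : HasDerivAt (fun t' : ℝ => ((Real.sin (ω * t') : ℝ) : ℂ)) (((Real.cos (ω*t) : ℝ) : ℂ) * (ω:ℂ)) t := by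
      have h := ((Real.hasDerivAt_sin (ω*t)).comp t hmul).ofReal_comp
      exact h.congr_deriv (by push_cast; ring)
    have hFd : HasDerivAt F ((m:ℂ)*(ω:ℂ)*(-((Real.sin (ω*t) : ℝ) : ℂ) * (ω:ℂ)) + 2*Complex.I*(σ:ℂ)*(((Real.cos (ω*t) : ℝ) : ℂ) * (ω:ℂ))) t := by
      have hFfun : F = fun t' : ℝ => (m:ℂ)*(ω:ℂ)*((Real.cos (ω*t') : ℝ) : ℂ)
          + 2*Complex.I*(σ:ℂ)*((Real.sin (ω*t') : ℝ) : ℂ) := funext hF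
      rw [hFfun]
      exact (hcos.const_mul ((m:ℂ)*(ω:ℂ))).add (hsin.const_mul (2*Complex.I*(σ:ℂ)))
    have hGd : HasDerivAt (fun t' : ℝ => 2*(σ:ℂ)*((Real.cos (ω*t') : ℝ) : ℂ)
          + Complex.I*(m:ℂ)*(ω:ℂ)*((Real.sin (ω*t') : ℝ) : ℂ)) (2*(σ:ℂ)*(-((Real.sin (ω*t) : ℝ) : ℂ) * (ω:ℂ)) + Complex.I*(m:ℂ)*(ω:ℂ)*(((Real.cos (ω*t) : ℝ) : ℂ) * (ω:ℂ))) t :=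
      (hcos.const_mul _).add (hsin.const_mul _)
    have hBd : HasDerivAt B ((-((m:ℂ)*(ω:ℂ)/2) * (2*(σ:ℂ)*(-((Real.sin (ω*t) : ℝ) : ℂ) * (ω:ℂ)) + Complex.I*(m:ℂ)*(ω:ℂ)*(((Real.cos (ω*t) : ℝ) : ℂ) * (ω:ℂ))) * F t - -((m:ℂ)*(ω:ℂ)/2) * (2*(σ:ℂ)*((Real.cos (ω*t) : ℝ) : ℂ) + Complex.I*(m:ℂ)*(ω:ℂ)*((Real.sin (ω*t) : ℝ) : ℂ)) * ((m:ℂ)*(ω:ℂ)*(-((Real.sin (ω*t) : ℝ) : ℂ) * (ω:ℂ)) + 2*Complex.I*(σ:ℂ)*(((Real.cos (ω*t) : ℝ) : ℂ) * (ω:ℂ)))) / F t ^ 2) t := by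
      have hBfun : B = fun t' : ℝ => -((m:ℂ)*(ω:ℂ)/2)
          * (2*(σ:ℂ)*((Real.cos (ω*t') : ℝ) : ℂ)
              + Complex.I*(m:ℂ)*(ω:ℂ)*((Real.sin (ω*t') : ℝ) : ℂ)) / F t' := funext hB
      rw [hBfun]
      exact (hGd.const_mul (-((m:ℂ)*(ω:ℂ)/2))).div hFd hFne
    have hE1 : HasDerivAt (fun t' : ℝ => Complex.exp (Complex.I*(gr:ℂ)*((t':ℝ):ℂ)))
        (Complex.exp (Complex.I*(gr:ℂ)*(t:ℂ)) * (Complex.I*(gr:ℂ))) t := by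
      have h0 : HasDerivAt (fun t' : ℝ => Complex.I*(gr:ℂ)*((t':ℝ):ℂ)) (Complex.I*(gr:ℂ)) t := by
        have h := ((hasDerivAt_id t).ofReal_comp).const_mul (Complex.I*(gr:ℂ))
        exact h.congr_deriv (by push_cast; ring)
      exact h0.cexp
    have hEL : HasDerivAt (fun t' : ℝ => Complex.exp (-((ν:ℂ) + 3/2) * Complex.log (F t')))
        (Complex.exp (-((ν:ℂ) + 3/2) * Complex.log (F t)) * (-((ν:ℂ) + 3/2) * (((m:ℂ)*(ω:ℂ)*(-((Real.sin (ω*t) : ℝ) : ℂ) * (ω:ℂ)) + 2*Complex.I*(σ:ℂ)*(((Real.cos (ω*t) : ℝ) : ℂ) * (ω:ℂ))) / F t))) t :=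
      ((hFd.clog_real hslit').const_mul (-((ν:ℂ) + 3/2))).cexp
    have hEBt : HasDerivAt (fun t' : ℝ => Complex.exp (B t' * (a:ℂ)^2))
        (Complex.exp (B t * (a:ℂ)^2) * (((-((m:ℂ)*(ω:ℂ)/2) * (2*(σ:ℂ)*(-((Real.sin (ω*t) : ℝ) : ℂ) * (ω:ℂ)) + Complex.I*(m:ℂ)*(ω:ℂ)*(((Real.cos (ω*t) : ℝ) : ℂ) * (ω:ℂ))) * F t - -((m:ℂ)*(ω:ℂ)/2) * (2*(σ:ℂ)*((Real.cos (ω*t) : ℝ) : ℂ) + Complex.I*(m:ℂ)*(ω:ℂ)*((Real.sin (ω*t) : ℝ) : ℂ)) * ((m:ℂ)*(ω:ℂ)*(-((Real.sin (ω*t) : ℝ) : ℂ) * (ω:ℂ)) + 2*Complex.I*(σ:ℂ)*(((Real.cos (ω*t) : ℝ) : ℂ) * (ω:ℂ)))) / F t ^ 2) * (a:ℂ)^2)) t := (hBd.mul_const ((a:ℂ)^2)).cexp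
    have hψt : HasDerivAt (fun t' : ℝ => Ψ a t') ((N:ℂ) * Complex.exp (Complex.I*(gr:ℂ)*(t:ℂ)) * ((a ^ (ν + 1) : ℝ) : ℂ) * (((m*ω) ^ (ν + 3/2) : ℝ) : ℂ) * Complex.exp (-((ν:ℂ) + 3/2) * Complex.log (F t)) * Complex.exp (B t * (a:ℂ)^2) * (Complex.I*(gr:ℂ) + -((ν:ℂ) + 3/2) * (((m:ℂ)*(ω:ℂ)*(-((Real.sin (ω*t) : ℝ) : ℂ) * (ω:ℂ)) + 2*Complex.I*(σ:ℂ)*(((Real.cos (ω*t) : ℝ) : ℂ) * (ω:ℂ))) / F t) + ((-((m:ℂ)*(ω:ℂ)/2) * (2*(σ:ℂ)*(-((Real.sin (ω*t) : ℝ) : ℂ) * (ω:ℂ)) + Complex.I*(m:ℂ)*(ω:ℂ)*(((Real.cos (ω*t) : ℝ) : ℂ) * (ω:ℂ))) * F t - -((m:ℂ)*(ω:ℂ)/2) * (2*(σ:ℂ)*((Real.cos (ω*t) : ℝ) : ℂ) + Complex.I*(m:ℂ)*(ω:ℂ)*((Real.sin (ω*t) : ℝ) : ℂ)) * ((m:ℂ)*(ω:ℂ)*(-((Real.sin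 (ω*t) : ℝ) : ℂ) * (ω:ℂ)) + 2*Complex.I*(σ:ℂ)*(((Real.cos (ω*t) : ℝ) : ℂ) * (ω:ℂ)))) / F t ^ 2) * (a:ℂ)^2)) t := by
      have hψtfun : (fun t' : ℝ => Ψ a t') = fun t' : ℝ => (N:ℂ)
          * Complex.exp (Complex.I*(gr:ℂ)*((t':ℝ):ℂ))
          * ((a ^ (ν + 1) : ℝ) : ℂ) * (((m*ω) ^ (ν + 3/2) : ℝ) : ℂ)
          * Complex.exp (-((ν:ℂ) + 3/2) * Complex.log (F t'))
          * Complex.exp (B t' * (a:ℂ)^2) := funext (hΨ a)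
      rw [hψtfun]
      refine (((((hE1.const_mul (N:ℂ)).mul_const _).mul_const _).mul hEL).mul hEBt).congr_deriv ?_
      simp only [Pi.mul_apply]
      ring
    have hEBx : ∀ x : ℝ, HasDerivAt (fun y : ℝ => Complex.exp (B t * ((y:ℝ):ℂ)^2))
        (Complex.exp (B t * ((x:ℝ):ℂ)^2) * (B t * (2*((x:ℝ):ℂ)))) x := by
      intro x
      have hsq : HasDerivAt (fun y : ℝ => ((y:ℝ):ℂ)^2) (2*((x:ℝ):ℂ)) x := by
        have h := ((hasDerivAt_id x).ofReal_comp).mul ((hasDerivAt_id x).ofReal_comp)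
        have h2 : HasDerivAt (fun y : ℝ => ((y:ℝ):ℂ)*((y:ℝ):ℂ)) (2*((x:ℝ):ℂ)) x :=
          h.congr_deriv (by simp only [id_eq]; push_cast; ring)
        simpa [pow_two] using h2
      have h1 : HasDerivAt (fun y : ℝ => B t * ((y:ℝ):ℂ)^2) (B t * (2*((x:ℝ):ℂ))) x :=
        hsq.const_mul (B t)
      exact h1.cexp
    have hrpow1 : ∀ x : ℝ, 0 < x → HasDerivAt (fun y : ℝ => (((y:ℝ) ^ (ν+1) : ℝ) : ℂ))
        ((((ν+1) * (x:ℝ) ^ ν : ℝ)) : ℂ) x := by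
      intro x hx
      have h := (Real.hasDerivAt_rpow_const (x := x) (p := ν+1) (Or.inl hx.ne')).ofReal_comp
      exact h.congr_deriv (by rw [add_sub_cancel_right])
    have hrpow0 : ∀ x : ℝ, 0 < x → HasDerivAt (fun y : ℝ => (((ν+1) * (y:ℝ) ^ ν : ℝ) : ℂ))
        ((((ν+1) * (ν * (x:ℝ) ^ (ν-1)) : ℝ)) : ℂ) x := by
      intro x hx
      exact ((Real.hasDerivAt_rpow_const (x := x) (p := ν) (Or.inl hx.ne')).const_mul (ν+1)).ofReal_comp
    have hd1 : ∀ x : ℝ, 0 < x → HasDerivAt (fun a' : ℝ => Ψ a' t) ((N:ℂ) * Complex.exp (Complex.I*(gr:ℂ)*(t:ℂ)) * (((m*ω) ^ (ν + 3/2) : ℝ) : ℂ) * Complex.exp (-((ν:ℂ) + 3/2) * Complex.log (F t)) * Complex.exp (B t * ((x:ℝ):ℂ)^2) * ((((ν+1) * (x:ℝ) ^ ν : ℝ) : ℂ) + (((x:ℝ) ^ (ν+1) : ℝ) : ℂ) * (B t * (2*((x:ℝ):ℂ))))) x := by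
      intro x hx
      have hfun : (fun a' : ℝ => Ψ a' t) = fun a' : ℝ => (N:ℂ) * Complex.exp (Complex.I*(gr:ℂ)*(t:ℂ)) * (((m*ω) ^ (ν + 3/2) : ℝ) : ℂ) * Complex.exp (-((ν:ℂ) + 3/2) * Complex.log (F t))
          * ((a' ^ (ν + 1) : ℝ) : ℂ) * Complex.exp (B t * ((a':ℝ):ℂ)^2) := by
        funext y
        rw [hΨ]
        ring
      rw [hfun]
      refine (((hrpow1 x hx).const_mul _).mul (hEBx x)).congr_deriv ?_
      ring
    have hev : deriv (fun a' : ℝ => Ψ a' t) =ᶠ[nhds a] (fun x : ℝ => (N:ℂ) * Complex.exp (Complex.I*(gr:ℂ)*(t:ℂ)) * (((m*ω) ^ (ν + 3/2) : ℝ) : ℂ) * Complex.exp (-((ν:ℂ) + 3/2) * Complex.log (F t)) * Complex.exp (B t * ((x:ℝ):ℂ)^2) * ((((ν+1) * (x:ℝ) ^ ν : ℝ) : ℂ) + (((x:ℝ) ^ (ν+1) : ℝ) : ℂ) * (B t * (2*((x:ℝ):ℂ))))) := by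
      filter_upwards [eventually_gt_nhds ha] with x hx
      exact (hd1 x hx).deriv
    have hD2eq : deriv (deriv (fun a' : ℝ => Ψ a' t)) a = deriv (fun x : ℝ => (N:ℂ) * Complex.exp (Complex.I*(gr:ℂ)*(t:ℂ)) * (((m*ω) ^ (ν + 3/2) : ℝ) : ℂ) * Complex.exp (-((ν:ℂ) + 3/2) * Complex.log (F t)) * Complex.exp (B t * ((x:ℝ):ℂ)^2) * ((((ν+1) * (x:ℝ) ^ ν : ℝ) : ℂ) + (((x:ℝ) ^ (ν+1) : ℝ) : ℂ) * (B t * (2*((x:ℝ):ℂ))))) a := hev.deriv_eq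
    have hlin : HasDerivAt (fun x : ℝ => B t * (2*((x:ℝ):ℂ))) (B t * 2) a := by
      have h := ((hasDerivAt_id a).ofReal_comp).const_mul (B t * 2)
      simpa [mul_assoc] using h
    have hS : HasDerivAt (fun x : ℝ => (((ν+1) * (x:ℝ) ^ ν : ℝ) : ℂ)
          + (((x:ℝ) ^ (ν+1) : ℝ) : ℂ) * (B t * (2*((x:ℝ):ℂ)))) ((((ν+1) * (ν * a ^ (ν-1)) : ℝ) : ℂ) + (((ν+1) * a ^ ν : ℝ) : ℂ) * (B t * (2*(a:ℂ))) + ((a ^ (ν+1) : ℝ) : ℂ) * (B t * 2)) a := by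
      refine ((hrpow0 a ha).add ((hrpow1 a ha).mul hlin)).congr_deriv ?_
      ring
    have hd2 : HasDerivAt (fun x : ℝ => (N:ℂ) * Complex.exp (Complex.I*(gr:ℂ)*(t:ℂ)) * (((m*ω) ^ (ν + 3/2) : ℝ) : ℂ) * Complex.exp (-((ν:ℂ) + 3/2) * Complex.log (F t)) * Complex.exp (B t * ((x:ℝ):ℂ)^2) * ((((ν+1) * (x:ℝ) ^ ν : ℝ) : ℂ) + (((x:ℝ) ^ (ν+1) : ℝ) : ℂ) * (B t * (2*((x:ℝ):ℂ))))) ((N:ℂ) * Complex.exp (Complex.I*(gr:ℂ)*(t:ℂ)) * (((m*ω) ^ (ν + 3/2) : ℝ) : ℂ) * Complex.exp (-((ν:ℂ) + 3/2) * Complex.log (F t)) * Complex.exp (B t * (a:ℂ)^2) * ((B t * (2*(a:ℂ))) * ((((ν+1) * a ^ ν : ℝ) : ℂ) + ((a ^ (ν+1) : ℝ) : ℂ) * (B t * (2*(a:ℂ)))) + ((((ν+1) * (ν * a ^ (ν-1)) : ℝ) : ℂ) + (((ν+1) * a ^ ν : ℝ) : ℂ) * (B t * (2*(a:ℂ)))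 + ((a ^ (ν+1) : ℝ) : ℂ) * (B t * 2)))) a := by
      refine (((hEBx a).const_mul ((N:ℂ) * Complex.exp (Complex.I*(gr:ℂ)*(t:ℂ)) * (((m*ω) ^ (ν + 3/2) : ℝ) : ℂ) * Complex.exp (-((ν:ℂ) + 3/2) * Complex.log (F t)))).mul hS).congr_deriv ?_
      ring
    rw [hΨ a t, hψt.deriv, hD2eq, hd2.deriv]
    have hA1 : (a : ℝ) ^ (ν+1) = a ^ ν * a := by
      rw [Real.rpow_add_one haR]
    have hA2 : (a : ℝ) ^ (ν-1) = a ^ ν / a := by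
      rw [Real.rpow_sub ha, Real.rpow_one]
    rw [hA1, hA2]
    have hI2 : (Complex.I)^2 = -1 := Complex.I_sq
    have hI3 : (Complex.I)^3 = -Complex.I := by
      rw [show (Complex.I)^3 = (Complex.I)^2 * Complex.I by ring, hI2]; ring
    have hI4 : (Complex.I)^4 = 1 := by
      rw [show (Complex.I)^4 = ((Complex.I)^2)^2 by ring, hI2]; norm_num
    have hI5 : (Complex.I)^5 = Complex.I := by
      rw [show (Complex.I)^5 = (Complex.I)^4 * Complex.I by ring, hI4]; ring
    have hI6 : (Complex.I)^6 = -1 := by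
      rw [show (Complex.I)^6 = ((Complex.I)^2)^3 by ring, hI2]; norm_num
    have q1 : Complex.I * (Complex.I * (gr:ℂ)) = -(gr:ℂ) := by
      linear_combination (gr:ℂ) * hI2
    have q2 : Complex.I * (((m:ℂ)*(ω:ℂ)*(-((Real.sin (ω*t) : ℝ) : ℂ) * (ω:ℂ)) + 2*Complex.I*(σ:ℂ)*(((Real.cos (ω*t) : ℝ) : ℂ) * (ω:ℂ)))) = -((ω:ℂ) * (2*(σ:ℂ)*((Real.cos (ω*t) : ℝ) : ℂ) + Complex.I*(m:ℂ)*(ω:ℂ)*((Real.sin (ω*t) : ℝ) : ℂ))) := by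
      linear_combination (2*(σ:ℂ)*((Real.cos (ω*t) : ℝ) : ℂ)*(ω:ℂ)) * hI2
    have q3 : Complex.I * ((-((m:ℂ)*(ω:ℂ)/2) * (2*(σ:ℂ)*(-((Real.sin (ω*t) : ℝ) : ℂ) * (ω:ℂ)) + Complex.I*(m:ℂ)*(ω:ℂ)*(((Real.cos (ω*t) : ℝ) : ℂ) * (ω:ℂ))) * F t - -((m:ℂ)*(ω:ℂ)/2) * (2*(σ:ℂ)*((Real.cos (ω*t) : ℝ) : ℂ) + Complex.I*(m:ℂ)*(ω:ℂ)*((Real.sin (ω*t) : ℝ) : ℂ)) * ((m:ℂ)*(ω:ℂ)*(-((Real.sin (ω*t) : ℝ) : ℂ) * (ω:ℂ)) + 2*Complex.I*(σ:ℂ)*(((Real.cos (ω*t) : ℝ) : ℂ) * (ω:ℂ)))) / F t ^ 2) = (m:ℂ)*(ω:ℂ)^2/2 - 2*(B t)^2/(m:ℂ) := by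
      have hnum : Complex.I * (-((m:ℂ)*(ω:ℂ)/2) * (2*(σ:ℂ)*(-((Real.sin (ω*t) : ℝ) : ℂ) * (ω:ℂ)) + Complex.I*(m:ℂ)*(ω:ℂ)*(((Real.cos (ω*t) : ℝ) : ℂ) * (ω:ℂ))) * F t - -((m:ℂ)*(ω:ℂ)/2) * (2*(σ:ℂ)*((Real.cos (ω*t) : ℝ) : ℂ) + Complex.I*(m:ℂ)*(ω:ℂ)*((Real.sin (ω*t) : ℝ) : ℂ)) * ((m:ℂ)*(ω:ℂ)*(-((Real.sin (ω*t) : ℝ) : ℂ) * (ω:ℂ)) + 2*Complex.I*(σ:ℂ)*(((Real.cos (ω*t) : ℝ) : ℂ) * (ω:ℂ))))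
          = (m:ℂ)*(ω:ℂ)^2/2 * (F t)^2 - (m:ℂ)*(ω:ℂ)^2/2 * (2*(σ:ℂ)*((Real.cos (ω*t) : ℝ) : ℂ) + Complex.I*(m:ℂ)*(ω:ℂ)*((Real.sin (ω*t) : ℝ) : ℂ))^2 := by
        rw [hF t]
        linear_combination (-((m:ℂ)*(ω:ℂ)/2) * (ω:ℂ) * (((m:ℂ)*(ω:ℂ)*((Real.cos (ω*t) : ℝ) : ℂ) + 2*Complex.I*(σ:ℂ)*((Real.sin (ω*t) : ℝ) : ℂ))^2 - (2*(σ:ℂ)*((Real.cos (ω*t) : ℝ) : ℂ) + Complex.I*(m:ℂ)*(ω:ℂ)*((Real.sin (ω*t) : ℝ) : ℂ))^2)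
          - ((m:ℂ)*(ω:ℂ)/2) * Complex.I * ((Real.sin (ω*t) : ℝ) : ℂ) * (ω:ℂ)
            * ((m:ℂ)*(ω:ℂ)*(2*(σ:ℂ)*((Real.cos (ω*t) : ℝ) : ℂ) + Complex.I*(m:ℂ)*(ω:ℂ)*((Real.sin (ω*t) : ℝ) : ℂ)) - 2*(σ:ℂ)*((m:ℂ)*(ω:ℂ)*((Real.cos (ω*t) : ℝ) : ℂ) + 2*Complex.I*(σ:ℂ)*((Real.sin (ω*t) : ℝ) : ℂ)))) * hI2
      have hB2 : (B t)^2 = ((m:ℂ)*(ω:ℂ)/2)^2 * (2*(σ:ℂ)*((Real.cos (ω*t) : ℝ) : ℂ) + Complex.I*(m:ℂ)*(ω:ℂ)*((Real.sin (ω*t) : ℝ) : ℂ))^2 / (F t)^2 := by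
        rw [hB t]; ring
      have h3 : Complex.I * ((-((m:ℂ)*(ω:ℂ)/2) * (2*(σ:ℂ)*(-((Real.sin (ω*t) : ℝ) : ℂ) * (ω:ℂ)) + Complex.I*(m:ℂ)*(ω:ℂ)*(((Real.cos (ω*t) : ℝ) : ℂ) * (ω:ℂ))) * F t - -((m:ℂ)*(ω:ℂ)/2) * (2*(σ:ℂ)*((Real.cos (ω*t) : ℝ) : ℂ) + Complex.I*(m:ℂ)*(ω:ℂ)*((Real.sin (ω*t) : ℝ) : ℂ)) * ((m:ℂ)*(ω:ℂ)*(-((Real.sin (ω*t) : ℝ) : ℂ) * (ω:ℂ)) + 2*Complex.I*(σ:ℂ)*(((Real.cos (ω*t) : ℝ) : ℂ) * (ω:ℂ)))) / F t ^ 2)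
          = (Complex.I * (-((m:ℂ)*(ω:ℂ)/2) * (2*(σ:ℂ)*(-((Real.sin (ω*t) : ℝ) : ℂ) * (ω:ℂ)) + Complex.I*(m:ℂ)*(ω:ℂ)*(((Real.cos (ω*t) : ℝ) : ℂ) * (ω:ℂ))) * F t - -((m:ℂ)*(ω:ℂ)/2) * (2*(σ:ℂ)*((Real.cos (ω*t) : ℝ) : ℂ) + Complex.I*(m:ℂ)*(ω:ℂ)*((Real.sin (ω*t) : ℝ) : ℂ)) * ((m:ℂ)*(ω:ℂ)*(-((Real.sin (ω*t) : ℝ) : ℂ) * (ω:ℂ)) + 2*Complex.I*(σ:ℂ)*(((Real.cos (ω*t) : ℝ) : ℂ) * (ω:ℂ))))) / (F t)^2 := by ring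
      rw [h3, hnum, hB2]
      field_simp [hFne, hmC]
    have hBm : B t / (m:ℂ) = -((ω:ℂ)/2) * (2*(σ:ℂ)*((Real.cos (ω*t) : ℝ) : ℂ) + Complex.I*(m:ℂ)*(ω:ℂ)*((Real.sin (ω*t) : ℝ) : ℂ)) / F t := by
      rw [hB t]
      field_simp
    have gaa : (a:ℂ) * (a:ℂ)⁻¹ = 1 := mul_inv_cancel₀ haC
    simp only [Complex.ofReal_mul, Complex.ofReal_div, Complex.ofReal_add, Complex.ofReal_sub,
      Complex.ofReal_neg, Complex.ofReal_one, Complex.ofReal_pow, Complex.ofReal_ofNat]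
    linear_combination ((N:ℂ) * Complex.exp (Complex.I*(gr:ℂ)*(t:ℂ)) * (((a ^ ν : ℝ) : ℂ) * (a:ℂ)) * (((m*ω) ^ (ν + 3/2) : ℝ) : ℂ) * Complex.exp (-((ν:ℂ) + 3/2) * Complex.log (F t)) * Complex.exp (B t * (a:ℂ)^2)) * q1
      + (-((ν:ℂ)+3/2) * ((N:ℂ) * Complex.exp (Complex.I*(gr:ℂ)*(t:ℂ)) * (((a ^ ν : ℝ) : ℂ) * (a:ℂ)) * (((m*ω) ^ (ν + 3/2) : ℝ) : ℂ) * Complex.exp (-((ν:ℂ) + 3/2) * Complex.log (F t)) * Complex.exp (B t * (a:ℂ)^2)) / F t) * q2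
      + (((N:ℂ) * Complex.exp (Complex.I*(gr:ℂ)*(t:ℂ)) * (((a ^ ν : ℝ) : ℂ) * (a:ℂ)) * (((m*ω) ^ (ν + 3/2) : ℝ) : ℂ) * Complex.exp (-((ν:ℂ) + 3/2) * Complex.log (F t)) * Complex.exp (B t * (a:ℂ)^2)) * (a:ℂ)^2) * q3
      + ((2*(ν:ℂ)+3) * ((N:ℂ) * Complex.exp (Complex.I*(gr:ℂ)*(t:ℂ)) * (((a ^ ν : ℝ) : ℂ) * (a:ℂ)) * (((m*ω) ^ (ν + 3/2) : ℝ) : ℂ) * Complex.exp (-((ν:ℂ) + 3/2) * Complex.log (F t)) * Complex.exp (B t * (a:ℂ)^2))) * hBm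
      + (-((ν:ℂ)*((ν:ℂ)+1)/(2*(m:ℂ)*(a:ℂ))) * ((N:ℂ) * Complex.exp (Complex.I*(gr:ℂ)*(t:ℂ)) * (((m*ω) ^ (ν + 3/2) : ℝ) : ℂ) * Complex.exp (-((ν:ℂ) + 3/2) * Complex.log (F t)) * Complex.exp (B t * (a:ℂ)^2)) * ((a ^ ν : ℝ) : ℂ)) * gaa
  · intro a ha
    have hmω : (0:ℝ) < m*ω := mul_pos hm hω
    have hF0 : F 0 = ((m*ω : ℝ) : ℂ) := by
      rw [hF 0]
      push_cast [mul_zero, Real.cos_zero, Real.sin_zero]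
      ring
    have hB0 : B 0 = -(σ:ℂ) := by
      rw [hB 0, hF0]
      push_cast [mul_zero, Real.cos_zero, Real.sin_zero]
      field_simp
      ring
    have hlog0 : Complex.log (F 0) = ((Real.log (m*ω) : ℝ) : ℂ) := by
      rw [hF0]
      exact (Complex.ofReal_log hmω.le).symm
    have key : (((m*ω) ^ (ν + 3/2) : ℝ) : ℂ)
        * Complex.exp (-((ν:ℂ) + 3/2) * ((Real.log (m*ω) : ℝ) : ℂ)) = 1 := by
      have h1 : -((ν:ℂ) + 3/2) * ((Real.log (m*ω) : ℝ) : ℂ)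
          = (((-(ν + 3/2)) * Real.log (m*ω) : ℝ) : ℂ) := by push_cast; ring
      rw [h1, ← Complex.ofReal_exp, ← Complex.ofReal_mul, ← Complex.ofReal_one]
      norm_cast
      rw [Real.rpow_def_of_pos hmω, ← Real.exp_add]
      have h2 : Real.log (m*ω) * (ν + 3/2) + -(ν + 3/2) * Real.log (m*ω) = 0 := by ring
      rw [h2, Real.exp_zero]
    rw [hΨ a 0, hB0, hlog0]
    simp only [Complex.ofReal_zero, mul_zero, Complex.exp_zero, mul_one]
    linear_combination ((N:ℝ):ℂ) * ((a ^ (ν + 1) : ℝ) : ℂ)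
      * Complex.exp (-(σ:ℂ)*(a:ℂ)^2) * key
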